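/- Let K be a field of characteristic p > 0, q = p^n, R = K[X,Y,U,V]/(XY − UV), with maximal ideal m = (x,y,u,v), and let F^n(K) = R/(x^q, y^q, u^q, v^q) be the n-th Frobenius power of K = R/m. Then dim_K Hom_R(K, F^n(K)) ≥ q = p^n. -/

import Mathlib

set_option synthInstance.maxHeartbeats 1000000
set_option maxHeartbeats 1000000

open MvPolynomial

/-- `R = K[X,Y,U,V]/(XY - UV)`. -/
noncomputable abbrev hypersurfaceRing (K : Type) [Field K] : Type :=
  MvPolynomial (Fin 4) K ⧸
    Ideal.span {(X 0 : MvPolynomial (Fin 4) K) * X 1 - X 2 * X 3}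

/-- The `n`-th Frobenius power `F^n(K) = R/(x^q, y^q, u^q, v^q)` of the residue field. -/
noncomputable abbrev frobPower (K : Type) [Field K] (q : ℕ) : Type :=
  hypersurfaceRing K ⧸
    Ideal.span ({Ideal.Quotient.mk _ (X 0) ^ q, Ideal.Quotient.mk _ (X 1) ^ q,
      Ideal.Quotient.mk _ (X 2) ^ q, Ideal.Quotient.mk _ (X 3) ^ q} :
        Set (hypersurfaceRing K))

/-- The socle `{t : F^n(K) | m · t = 0}`, identified with `Hom_R(K, F^n(K))`,
as a `K`-subspace of `F^n(K)`. -/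
noncomputable abbrev frobSocle (K : Type) [Field K] (q : ℕ) :
    Submodule K (frobPower K q) :=
  LinearMap.ker (LinearMap.mulLeft K
      ((Ideal.Quotient.mk _ (Ideal.Quotient.mk _ (X 0) : hypersurfaceRing K)) : frobPower K q)) ⊓
  LinearMap.ker (LinearMap.mulLeft K
      ((Ideal.Quotient.mk _ (Ideal.Quotient.mk _ (X 1) : hypersurfaceRing K)) : frobPower K q)) ⊓
  LinearMap.ker (LinearMap.mulLeft K
      ((Ideal.Quotient.mk _ (Ideal.Quotient.mk _ (X 2) : hypersurfaceRing K)) : frobPower K q)) ⊓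
  LinearMap.ker (LinearMap.mulLeft K
      ((Ideal.Quotient.mk _ (Ideal.Quotient.mk _ (X 3) : hypersurfaceRing K)) : frobPower K q))

namespace FrobAux

variable {K : Type} [Field K]

/-! ### Exponent vectors -/

noncomputable def vec (a b c d : ℕ) : Fin 4 →₀ ℕ :=
  Finsupp.single 0 a + Finsupp.single 1 b + Finsupp.single 2 c + Finsupp.single 3 d

@[simp] lemma vec_apply_0 (a b c d : ℕ) : vec a b c d 0 = a := by
  simp [vec, Finsupp.single_apply]
@[simp] lemma vec_apply_1 (a b c d : ℕ) : vec a b c d 1 = b := by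
  simp [vec, Finsupp.single_apply]
@[simp] lemma vec_apply_2 (a b c d : ℕ) : vec a b c d 2 = c := by
  simp [vec, Finsupp.single_apply]
@[simp] lemma vec_apply_3 (a b c d : ℕ) : vec a b c d 3 = d := by
  simp [vec, Finsupp.single_apply]

lemma vec_eq_iff {a b c d a' b' c' d' : ℕ} :
    vec a b c d = vec a' b' c' d' ↔ a = a' ∧ b = b' ∧ c = c' ∧ d = d' := by
  constructor
  · intro h
    exact ⟨by simpa using DFunLike.congr_fun h 0, by simpa using DFunLike.congr_fun h 1,
      by simpa using DFunLike.congr_fun h 2, by simpa using DFunLike.congr_fun h 3⟩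
  · rintro ⟨rfl, rfl, rfl, rfl⟩; rfl

lemma vec_le_iff {a b c d a' b' c' d' : ℕ} :
    vec a b c d ≤ vec a' b' c' d' ↔ a ≤ a' ∧ b ≤ b' ∧ c ≤ c' ∧ d ≤ d' := by
  rw [Finsupp.le_def]
  constructor
  · intro h
    exact ⟨by simpa using h 0, by simpa using h 1, by simpa using h 2, by simpa using h 3⟩
  · rintro ⟨h0, h1, h2, h3⟩ i
    fin_cases i <;> simpa

lemma vec_sub {a b c d a' b' c' d' : ℕ} :
    vec a' b' c' d' - vec a b c d = vec (a' - a) (b' - b) (c' - c) (d' - d) := by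
  ext i
  fin_cases i <;> simp [Finsupp.tsub_apply]

lemma monomial_vec (a b c d : ℕ) :
    (monomial (vec a b c d) (1 : K)) = X 0 ^ a * X 1 ^ b * X 2 ^ c * X 3 ^ d := by
  simp [X_pow_eq_monomial, monomial_mul, vec]

/-! ### The coefficient functionals -/

/-- The linear functional summing the coefficients along the equivalence class
(under the move `xy ↔ uv`) of the monomial `x^j u^r v^(j+r)`. -/
noncomputable def lam (j r : ℕ) : MvPolynomial (Fin 4) K →ₗ[K] K :=
  ∑ x ∈ Finset.HasAntidiagonal.antidiagonal r, lcoeff K (vec (j + x.1) x.1 x.2 (j + x.2))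

lemma lam_apply (j r : ℕ) (P : MvPolynomial (Fin 4) K) :
    lam j r P = ∑ x ∈ Finset.HasAntidiagonal.antidiagonal r,
      coeff (vec (j + x.1) x.1 x.2 (j + x.2)) P := by
  simp [lam, lcoeff]

/-- `lam` vanishes on multiples of `X i ^ q`. -/
lemma lam_mul_pow (j r q : ℕ) (hjr : j + r < q) (i : Fin 4)
    (g : MvPolynomial (Fin 4) K) : lam j r (g * X i ^ q) = 0 := by
  rw [lam_apply]
  refine Finset.sum_eq_zero fun x hx => ?_
  rw [X_pow_eq_monomial, coeff_mul_monomial', if_neg]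
  rw [Finsupp.single_le_iff]
  have hx' := Finset.HasAntidiagonal.mem_antidiagonal.mp hx
  fin_cases i <;> simp <;> omega

/-- `lam` vanishes on multiples of `f = X0 X1 - X2 X3`. -/
lemma lam_mul_f (j r : ℕ) (g : MvPolynomial (Fin 4) K) :
    lam j r (g * (X 0 * X 1 - X 2 * X 3)) = 0 := by
  have h01 : (X 0 * X 1 : MvPolynomial (Fin 4) K) = monomial (vec 1 1 0 0) 1 := by
    rw [monomial_vec]; ring
  have h23 : (X 2 * X 3 : MvPolynomial (Fin 4) K) = monomial (vec 0 0 1 1) 1 := by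
    rw [monomial_vec]; ring
  rw [mul_sub, map_sub, lam_apply, lam_apply, h01, h23]
  have key : ∀ x ∈ Finset.HasAntidiagonal.antidiagonal r,
      coeff (vec (j + x.1) x.1 x.2 (j + x.2)) (g * monomial (vec 1 1 0 0) 1)
        = (if 1 ≤ x.1 then coeff (vec (j + x.1 - 1) (x.1 - 1) x.2 (j + x.2)) g else 0) := by
    intro x hx
    rw [coeff_mul_monomial']
    by_cases hb : 1 ≤ x.1
    · rw [if_pos (by rw [vec_le_iff]; omega), if_pos hb, vec_sub, mul_one]
      exact congrArg (fun m => coeff m g) (vec_eq_iff.mpr (by omega))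
    · rw [if_neg (by rw [vec_le_iff]; omega), if_neg hb]
  have key2 : ∀ x ∈ Finset.HasAntidiagonal.antidiagonal r,
      coeff (vec (j + x.1) x.1 x.2 (j + x.2)) (g * monomial (vec 0 0 1 1) 1)
        = (if 1 ≤ x.2 then coeff (vec (j + x.1) x.1 (x.2 - 1) (j + x.2 - 1)) g else 0) := by
    intro x hx
    rw [coeff_mul_monomial']
    by_cases hc : 1 ≤ x.2
    · rw [if_pos (by rw [vec_le_iff]; omega), if_pos hc, vec_sub, mul_one]
      exact congrArg (fun m => coeff m g) (vec_eq_iff.mpr (by omega))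
    · rw [if_neg (by rw [vec_le_iff]; omega), if_neg hc]
  rw [Finset.sum_congr rfl key, Finset.sum_congr rfl key2]
  rcases r with _ | r'
  · simp
  · rw [Finset.Nat.sum_antidiagonal_succ, Finset.Nat.sum_antidiagonal_succ']
    simp only [if_neg (by omega : ¬ (1:ℕ) ≤ 0), if_pos (by omega : (1:ℕ) ≤ 0 + 1)]
    rw [sub_eq_zero, zero_add, zero_add]
    refine Finset.sum_congr rfl fun x hx => ?_
    have : 1 ≤ x.1 + 1 := by omega
    rw [if_pos this, if_pos (by omega : 1 ≤ x.2 + 1)]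
    exact congrArg (fun m => coeff m g) (vec_eq_iff.mpr (by omega))

/-! ### Quotient ring machinery -/

noncomputable abbrev I1 (K : Type) [Field K] : Ideal (MvPolynomial (Fin 4) K) :=
  Ideal.span {(X 0 : MvPolynomial (Fin 4) K) * X 1 - X 2 * X 3}

noncomputable abbrev mkR (K : Type) [Field K] :
    MvPolynomial (Fin 4) K →+* hypersurfaceRing K :=
  Ideal.Quotient.mk (I1 K)

noncomputable abbrev JJ (K : Type) [Field K] (q : ℕ) : Ideal (hypersurfaceRing K) :=
  Ideal.span ({Ideal.Quotient.mk _ (X 0) ^ q, Ideal.Quotient.mk _ (X 1) ^ q,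
      Ideal.Quotient.mk _ (X 2) ^ q, Ideal.Quotient.mk _ (X 3) ^ q} :
        Set (hypersurfaceRing K))

noncomputable abbrev mkF (K : Type) [Field K] (q : ℕ) :
    hypersurfaceRing K →+* frobPower K q :=
  Ideal.Quotient.mk (JJ K q)

lemma pow_mem_JJ (q : ℕ) (i : Fin 4) : (mkR K (X i)) ^ q ∈ JJ K q := by
  apply Ideal.subset_span
  fin_cases i
  · left; rfl
  · right; left; rfl
  · right; right; left; rfl
  · right; right; right; rfl

lemma pi_zero (q : ℕ) (i : Fin 4) (P C W : MvPolynomial (Fin 4) K)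
    (hP : P = C * (X 0 * X 1 - X 2 * X 3) + X i ^ q * W) :
    mkF K q (mkR K P) = 0 := by
  subst hP
  have hf : mkR K (X 0 * X 1 - X 2 * X 3) = 0 := by
    rw [Ideal.Quotient.eq_zero_iff_mem]
    exact Ideal.subset_span rfl
  rw [map_add, map_mul, hf, mul_zero, zero_add, map_mul, map_pow,
    Ideal.Quotient.eq_zero_iff_mem]
  exact Ideal.mul_mem_right _ _ (pow_mem_JJ q i)

/-! ### The socle monomials -/

/-- the socle monomial `x^a u^kk v^(a+kk)` -/
noncomputable def monE (a kk : ℕ) : MvPolynomial (Fin 4) K :=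
  monomial (vec a 0 kk (a + kk)) 1

lemma monE_eq (a kk : ℕ) :
    (monE a kk : MvPolynomial (Fin 4) K) = X 0 ^ a * X 2 ^ kk * X 3 ^ (a + kk) := by
  rw [monE, monomial_vec]; ring

lemma zero_of_mul_X0 (q a kk : ℕ) (hq : a + kk + 1 = q) :
    mkF K q (mkR K (X 0 * monE a kk)) = 0 := by
  obtain ⟨S, hS⟩ := sub_dvd_pow_sub_pow (X 0 * X 1 : MvPolynomial (Fin 4) K) (X 2 * X 3) kk
  refine pi_zero q 0 _ (-(X 3 ^ a * X 0 ^ (a + 1) * S)) (X 1 ^ kk * X 3 ^ a) ?_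
  rw [monE_eq, ← hq]
  linear_combination (-(X 3 ^ a * X 0 ^ (a + 1) : MvPolynomial (Fin 4) K)) * hS

lemma zero_of_mul_X3 (q a kk : ℕ) (hq : a + kk + 1 = q) :
    mkF K q (mkR K (X 3 * monE a kk)) = 0 := by
  refine pi_zero q 3 _ 0 (X 0 ^ a * X 2 ^ kk) ?_
  rw [monE_eq, ← hq]
  ring

lemma zero_of_mul_X2 (q a kk : ℕ) (hq : a + kk + 1 = q) :
    mkF K q (mkR K (X 2 * monE a kk)) = 0 := by
  rcases a with _ | a'
  · refine pi_zero q 2 _ 0 (X 3 ^ kk) ?_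
    rw [monE_eq, ← hq]
    ring
  · obtain ⟨S, hS⟩ :=
      sub_dvd_pow_sub_pow (X 0 * X 1 : MvPolynomial (Fin 4) K) (X 2 * X 3) (kk + 1)
    refine pi_zero q 0 _ (-(X 0 ^ (a' + 1) * X 3 ^ a' * S)) (X 1 ^ (kk + 1) * X 3 ^ a') ?_
    rw [monE_eq, ← hq]
    linear_combination (-(X 0 ^ (a' + 1) * X 3 ^ a' : MvPolynomial (Fin 4) K)) * hS

lemma zero_of_mul_X1 (q a kk : ℕ) (hq : a + kk + 1 = q) :
    mkF K q (mkR K (X 1 * monE a kk)) = 0 := by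
  rcases a with _ | a'
  · obtain ⟨S, hS⟩ :=
      sub_dvd_pow_sub_pow (X 0 * X 1 : MvPolynomial (Fin 4) K) (X 2 * X 3) kk
    refine pi_zero q 1 _ (-(X 1 * S)) (X 0 ^ kk) ?_
    rw [monE_eq, ← hq]
    linear_combination (-(X 1 : MvPolynomial (Fin 4) K)) * hS
  · refine pi_zero q 3 _ (X 0 ^ a' * X 2 ^ kk * X 3 ^ (a' + 1 + kk))
      (X 0 ^ a' * X 2 ^ (kk + 1)) ?_
    rw [monE_eq, ← hq]
    ring

/-! ### Values of `lam` on socle monomials -/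

lemma lam_monE_self (j r : ℕ) : lam j r (monE j r : MvPolynomial (Fin 4) K) = 1 := by
  rw [lam_apply, monE]
  rw [Finset.sum_eq_single_of_mem ((0 : ℕ), r) (by simp)]
  · simp only
    rw [coeff_monomial, if_pos (vec_eq_iff.mpr (by omega))]
  · intro x hx hne
    have hx' := Finset.HasAntidiagonal.mem_antidiagonal.mp hx
    rw [coeff_monomial, if_neg]
    intro h
    obtain ⟨h1, h2, h3, h4⟩ := vec_eq_iff.mp h
    exact hne (Prod.ext_iff.mpr ⟨by omega, by omega⟩)

lemma lam_monE_ne (j r a kk : ℕ) (hne : a ≠ j) :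
    lam j r (monE a kk : MvPolynomial (Fin 4) K) = 0 := by
  rw [lam_apply, monE]
  refine Finset.sum_eq_zero fun x hx => ?_
  rw [coeff_monomial, if_neg]
  intro h
  obtain ⟨h1, h2, _, _⟩ := vec_eq_iff.mp h
  omega

/-- `lam` vanishes on the monomial ideal `(X0^q, X1^q, X2^q, X3^q)`. -/
lemma lam_span_pow (j r q : ℕ) (hjr : j + r < q) {P : MvPolynomial (Fin 4) K}
    (hP : P ∈ Ideal.span ({X 0 ^ q, X 1 ^ q, X 2 ^ q, X 3 ^ q} :
      Set (MvPolynomial (Fin 4) K))) :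
    lam j r P = 0 := by
  have H : ∀ x ∈ Ideal.span ({X 0 ^ q, X 1 ^ q, X 2 ^ q, X 3 ^ q} :
      Set (MvPolynomial (Fin 4) K)), ∀ g : MvPolynomial (Fin 4) K, lam j r (g * x) = 0 := by
    intro x hx
    induction hx using Submodule.span_induction with
    | mem x hmem =>
      intro g
      simp only [Set.mem_insert_iff, Set.mem_singleton_iff] at hmem
      rcases hmem with rfl | rfl | rfl | rfl <;> exact lam_mul_pow j r q hjr _ g
    | zero => intro g; simp
    | add x y hx hy ihx ihy =>
      intro g
      rw [mul_add, map_add, ihx g, ihy g, add_zero]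
    | smul a x hx ih =>
      intro g
      rw [smul_eq_mul, ← mul_assoc]
      exact ih (g * a)
  simpa using H P hP 1

end FrobAux

open FrobAux in
/-- For `R = K[X,Y,U,V]/(XY-UV)` and `q = p^n`,
`dim_K Hom_R(K, F^n(K)) ≥ p^n`, where `Hom_R(K, F^n(K))` is the socle of `F^n(K)`. -/
theorem dim_hom_frobPower_ge
    (K : Type) [Field K] (p : ℕ) [CharP K p] (hp : 0 < p) (n : ℕ)
    (q : ℕ) (hq : q = p ^ n) :
    (q : Cardinal) ≤ Module.rank K (frobSocle K q) := by
  have hq1 : 1 ≤ q := by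
    rw [hq]; exact Nat.one_le_pow _ _ hp
  -- the socle elements
  set v : Fin q → frobPower K q :=
    fun a => mkF K q (mkR K (monE a (q - 1 - a))) with hv
  have hkk : ∀ a : Fin q, (a : ℕ) + (q - 1 - (a : ℕ)) + 1 = q := fun a => by
    have := a.isLt; omega
  -- membership in the socle
  have hmem : ∀ a : Fin q, v a ∈ frobSocle K q := by
    intro a
    have hmul : ∀ i : Fin 4,
        (mkF K q (mkR K (X i))) * v a = mkF K q (mkR K (X i * monE a (q - 1 - a))) := by
      intro i; rw [hv]; simp only [map_mul]
    refine Submodule.mem_inf.mpr ⟨Submodule.mem_inf.mpr ⟨Submodule.mem_inf.mpr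
      ⟨?_, ?_⟩, ?_⟩, ?_⟩ <;>
      rw [LinearMap.mem_ker, LinearMap.mulLeft_apply]
    · rw [hmul 0, zero_of_mul_X0 q _ _ (hkk a)]
    · rw [hmul 1, zero_of_mul_X1 q _ _ (hkk a)]
    · rw [hmul 2, zero_of_mul_X2 q _ _ (hkk a)]
    · rw [hmul 3, zero_of_mul_X3 q _ _ (hkk a)]
  -- linear independence
  have hind : LinearIndependent K v := by
    rw [Fintype.linearIndependent_iff]
    intro g hg a₀
    set P : MvPolynomial (Fin 4) K :=
      ∑ a : Fin q, C (g a) * monE a (q - 1 - a) with hP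
    have hPzero : mkF K q (mkR K P) = 0 := by
      rw [hP, map_sum, map_sum]
      rw [← hg]
      refine Finset.sum_congr rfl fun a _ => ?_
      rw [map_mul, map_mul, hv]
      have halg : mkF K q (mkR K (C (g a))) = (algebraMap K (frobPower K q) : K →+* frobPower K q) (g a) := by
        rw [← MvPolynomial.algebraMap_eq, Ideal.Quotient.mk_algebraMap, Ideal.Quotient.mk_algebraMap]
      rw [halg, ← Algebra.smul_def]
    -- pull back to the polynomial ring
    have hmemJ : mkR K P ∈ JJ K q := by
      rwa [Ideal.Quotient.eq_zero_iff_mem] at hPzero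
    have hJmap : JJ K q = Ideal.map (mkR K)
        (Ideal.span ({X 0 ^ q, X 1 ^ q, X 2 ^ q, X 3 ^ q} :
          Set (MvPolynomial (Fin 4) K))) := by
      rw [Ideal.map_span, Set.image_insert_eq, Set.image_insert_eq, Set.image_insert_eq,
        Set.image_singleton]
      simp only [map_pow]
    rw [hJmap] at hmemJ
    obtain ⟨P', hP'mem, hP'eq⟩ :=
      (Ideal.mem_map_iff_of_surjective (mkR K) Ideal.Quotient.mk_surjective).mp hmemJ
    have hsub : P - P' ∈ I1 K := by
      rw [← Ideal.Quotient.eq_zero_iff_mem, map_sub, hP'eq, sub_self]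
    obtain ⟨Cc, hCc⟩ := Ideal.mem_span_singleton.mp hsub
    -- apply the functional
    have hjr : (a₀ : ℕ) + (q - 1 - (a₀ : ℕ)) < q := by have := a₀.isLt; omega
    have hlamP : lam (a₀ : ℕ) (q - 1 - (a₀ : ℕ)) P = g a₀ := by
      rw [hP, map_sum]
      rw [Finset.sum_eq_single_of_mem a₀ (Finset.mem_univ _)]
      · rw [C_mul', map_smul]
        have : (monE (a₀ : ℕ) (q - 1 - (a₀ : ℕ)) : MvPolynomial (Fin 4) K)
            = monE (a₀ : ℕ) (q - 1 - (a₀ : ℕ)) := rfl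
        rw [lam_monE_self, smul_eq_mul, mul_one]
      · intro b _ hbne
        rw [C_mul', map_smul, lam_monE_ne _ _ _ _ (by
          intro h
          exact hbne (Fin.ext h)), smul_zero]
    have hlamP' : lam (a₀ : ℕ) (q - 1 - (a₀ : ℕ)) P = 0 := by
      have h1 : P = (P - P') + P' := by ring
      rw [h1, map_add, hCc, mul_comm, lam_mul_f, zero_add]
      exact lam_span_pow _ _ q hjr hP'mem
    rw [hlamP] at hlamP'
    exact hlamP'
  -- conclude
  let v' : Fin q → frobSocle K q := fun a => ⟨v a, hmem a⟩
  have hind' : LinearIndependent K v' := by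
    apply LinearIndependent.of_comp (frobSocle K q).subtype
    convert hind
    funext a; rfl
  have := hind'.cardinal_le_rank
  rwa [Cardinal.mk_fin] at this
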